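/- For m ≥ 3 and any partial endomorphism e of the Sugihara algebra Z_{2(m-1)}, the map ē on Z_{2m} defined by ē(±1) = ±1, ē(a) = e(a-1)+1 for a > 1 with a-1 ∈ dom e, and ē(a) = e(a+1)-1 for a < -1 with a+1 ∈ dom e, is a partial endomorphism of the Sugihara monoid W_{2m} (it preserves min, max, negation, Sugihara implication, and the constant t = 1 on its domain). -/
import Mathlib


/-- Sugihara implication on the chain of integers. -/
def sImp (a b : ℤ) : ℤ := if a ≤ b then max (-a) b else min (-a) b

/-- Derived fusion operation. -/
def sFus (a b : ℤ) : ℤ := -(sImp a (-b))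

/-- Universe of the Sugihara algebra Z_{2m-1}. -/
def Zodd (m : ℤ) : Set ℤ := {a | -(m-1) ≤ a ∧ a ≤ m-1}

/-- Universe of the Sugihara algebra Z_{2m}. -/
def Zeven (m : ℤ) : Set ℤ := {a | -m ≤ a ∧ a ≤ m ∧ a ≠ 0}

/-- The lifted domain. -/
def Dbar' (D : Set ℤ) : Set ℤ :=
  {1, -1} ∪ {a | 1 < a ∧ a - 1 ∈ D} ∪ {a | a < -1 ∧ a + 1 ∈ D}

/-- The lifted map. -/
def ebar' (e : ℤ → ℤ) : ℤ → ℤ := fun a =>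
  if a = 1 then 1 else if a = -1 then -1
  else if 1 < a then e (a - 1) + 1 else e (a + 1) - 1

lemma mem_Dbar' {D : Set ℤ} {a : ℤ} :
    a ∈ Dbar' D ↔ a = 1 ∨ a = -1 ∨ (1 < a ∧ a - 1 ∈ D) ∨ (a < -1 ∧ a + 1 ∈ D) := by
  simp only [Dbar', Set.mem_union, Set.mem_insert_iff, Set.mem_singleton_iff,
    Set.mem_setOf_eq, or_assoc]

lemma ebar'_one (e : ℤ → ℤ) : ebar' e 1 = 1 := by norm_num [ebar']

lemma ebar'_negone (e : ℤ → ℤ) : ebar' e (-1) = -1 := by norm_num [ebar']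

lemma ebar'_eval_pos (e : ℤ → ℤ) {a : ℤ} (h : 1 < a) : ebar' e a = e (a - 1) + 1 := by
  unfold ebar'; rw [if_neg (by omega), if_neg (by omega), if_pos h]

lemma ebar'_eval_neg (e : ℤ → ℤ) {a : ℤ} (h : a < -1) : ebar' e a = e (a + 1) - 1 := by
  unfold ebar'; rw [if_neg (by omega), if_neg (by omega), if_neg (by omega)]

/-- A strictly monotone, negation-commuting map on a negation-closed set
preserves min, max and Sugihara implication. -/
lemma preserve_ops (f : ℤ → ℤ) (S : Set ℤ)
    (hnegS : ∀ a ∈ S, -a ∈ S)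
    (hfneg : ∀ a ∈ S, f (-a) = -(f a))
    (hmono : ∀ a ∈ S, ∀ b ∈ S, a < b → f a < f b) :
    ∀ a ∈ S, ∀ b ∈ S,
      f (min a b) = min (f a) (f b) ∧ f (max a b) = max (f a) (f b) ∧
      f (sImp a b) = sImp (f a) (f b) := by
  have hmono' : ∀ a ∈ S, ∀ b ∈ S, a ≤ b → f a ≤ f b := by
    intro a ha b hb h
    rcases eq_or_lt_of_le h with h | h
    · rw [h]
    · exact (hmono a ha b hb h).le
  have hminf : ∀ a ∈ S, ∀ b ∈ S, f (min a b) = min (f a) (f b) := by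
    intro a ha b hb
    rcases le_total a b with h | h
    · rw [min_eq_left h, min_eq_left (hmono' a ha b hb h)]
    · rw [min_eq_right h, min_eq_right (hmono' b hb a ha h)]
  have hmaxf : ∀ a ∈ S, ∀ b ∈ S, f (max a b) = max (f a) (f b) := by
    intro a ha b hb
    rcases le_total a b with h | h
    · rw [max_eq_right h, max_eq_right (hmono' a ha b hb h)]
    · rw [max_eq_left h, max_eq_left (hmono' b hb a ha h)]
  intro a ha b hb
  refine ⟨hminf a ha b hb, hmaxf a ha b hb, ?_⟩
  by_cases h : a ≤ b
  · simp only [sImp, if_pos h, if_pos (hmono' a ha b hb h)]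
    rw [hmaxf (-a) (hnegS a ha) b hb, hfneg a ha]
  · have h' : b < a := not_le.mp h
    simp only [sImp, if_neg h, if_neg (not_le.mpr (hmono b hb a ha h'))]
    rw [hminf (-a) (hnegS a ha) b hb, hfneg a ha]

theorem lift_aux (m : ℤ) (hm : 3 ≤ m)
    (D : Set ℤ) (e : ℤ → ℤ)
    (hD : D ⊆ Zeven (m - 1))
    (hDcl : ∀ a ∈ D, ∀ b ∈ D, min a b ∈ D ∧ max a b ∈ D ∧ -a ∈ D ∧ sImp a b ∈ D)
    (hmem : ∀ a ∈ D, e a ∈ Zeven (m - 1))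
    (hmin : ∀ a ∈ D, ∀ b ∈ D, e (min a b) = min (e a) (e b))
    (hmax : ∀ a ∈ D, ∀ b ∈ D, e (max a b) = max (e a) (e b))
    (hneg : ∀ a ∈ D, e (-a) = -(e a))
    (himp : ∀ a ∈ D, ∀ b ∈ D, e (sImp a b) = sImp (e a) (e b)) :
    (Dbar' D ⊆ Zeven m) ∧
    ((1 : ℤ) ∈ Dbar' D) ∧
    (∀ a ∈ Dbar' D, ∀ b ∈ Dbar' D,
      min a b ∈ Dbar' D ∧ max a b ∈ Dbar' D ∧ -a ∈ Dbar' D ∧ sImp a b ∈ Dbar' D) ∧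
    (∀ a ∈ Dbar' D, ebar' e a ∈ Zeven m) ∧
    (∀ a ∈ Dbar' D, ∀ b ∈ Dbar' D,
      ebar' e (min a b) = min (ebar' e a) (ebar' e b) ∧
      ebar' e (max a b) = max (ebar' e a) (ebar' e b) ∧
      ebar' e (-a) = -(ebar' e a) ∧
      ebar' e (sImp a b) = sImp (ebar' e a) (ebar' e b)) ∧
    ebar' e 1 = 1 := by
  have hZ : ∀ a ∈ D, -(m-1) ≤ a ∧ a ≤ m-1 ∧ a ≠ 0 := fun a ha => hD ha
  have hZe : ∀ a ∈ D, -(m-1) ≤ e a ∧ e a ≤ m-1 ∧ e a ≠ 0 := fun a ha => hmem a ha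
  have hnegD : ∀ a ∈ D, -a ∈ D := fun a ha => (hDcl a ha a ha).2.2.1
  have hpos : ∀ a ∈ D, 0 < a → 0 < e a := by
    intro a ha h
    have h1 := hmin (-a) (hnegD a ha) a ha
    have h2 : min (-a) a = -a := by omega
    rw [h2, hneg a ha] at h1
    have h3 := (hZe a ha).2.2
    omega
  have hneg'' : ∀ a ∈ D, a < 0 → e a < 0 := by
    intro a ha h
    have := hpos (-a) (hnegD a ha) (by omega)
    rw [hneg a ha] at this; omega
  have hmono' : ∀ a ∈ D, ∀ b ∈ D, a ≤ b → e a ≤ e b := by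
    intro a ha b hb h
    have h1 := hmin a ha b hb
    rw [min_eq_left h] at h1
    omega
  have hmonoe : ∀ a ∈ D, ∀ b ∈ D, a < b → e a < e b := by
    intro a ha b hb h
    rcases lt_or_eq_of_le (hmono' a ha b hb h.le) with h' | h'
    · exact h'
    exfalso
    have h1 := himp b hb a ha
    have h2 : sImp b a = min (-b) a := by simp only [sImp]; rw [if_neg (by omega)]
    rw [h2, hmin (-b) (hnegD b hb) a ha, hneg b hb] at h1
    have h3 : sImp (e b) (e a) = max (-(e b)) (e a) := by
      simp only [sImp]; rw [if_pos (by omega)]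
    rw [h3] at h1
    have h4 := (hZe a ha).2.2
    omega
  have hprof : ∀ a ∈ Dbar' D,
      (a = 1 ∧ ebar' e a = 1) ∨ (a = -1 ∧ ebar' e a = -1) ∨
      (1 < a ∧ a ≤ m ∧ a - 1 ∈ D ∧ ebar' e a = e (a-1) + 1 ∧
        2 ≤ ebar' e a ∧ ebar' e a ≤ m) ∨
      (a < -1 ∧ -m ≤ a ∧ a + 1 ∈ D ∧ ebar' e a = e (a+1) - 1 ∧
        ebar' e a ≤ -2 ∧ -m ≤ ebar' e a) := by
    intro a ha
    rcases mem_Dbar'.mp ha with h | h | ⟨h1, h2⟩ | ⟨h1, h2⟩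
    · subst h; exact Or.inl ⟨rfl, ebar'_one e⟩
    · subst h; exact Or.inr (Or.inl ⟨rfl, ebar'_negone e⟩)
    · refine Or.inr (Or.inr (Or.inl ?_))
      have hb := hZ _ h2
      have hp := hpos _ h2 (by omega)
      have hbe := hZe _ h2
      have he := ebar'_eval_pos e h1
      exact ⟨h1, by omega, h2, he, by omega, by omega⟩
    · refine Or.inr (Or.inr (Or.inr ?_))
      have hb := hZ _ h2
      have hp := hneg'' _ h2 (by omega)
      have hbe := hZe _ h2
      have he := ebar'_eval_neg e h1
      exact ⟨h1, by omega, h2, he, by omega, by omega⟩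
  have hnegbar : ∀ a ∈ Dbar' D, -a ∈ Dbar' D := by
    intro a ha
    rcases mem_Dbar'.mp ha with h | h | ⟨h1, h2⟩ | ⟨h1, h2⟩
    · exact mem_Dbar'.mpr (Or.inr (Or.inl (by omega)))
    · exact mem_Dbar'.mpr (Or.inl (by omega))
    · refine mem_Dbar'.mpr (Or.inr (Or.inr (Or.inr ⟨by omega, ?_⟩)))
      rw [show -a + 1 = -(a-1) by ring]; exact hnegD _ h2
    · refine mem_Dbar'.mpr (Or.inr (Or.inr (Or.inl ⟨by omega, ?_⟩)))
      rw [show -a - 1 = -(a+1) by ring]; exact hnegD _ h2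
  have hbarneg : ∀ a ∈ Dbar' D, ebar' e (-a) = -(ebar' e a) := by
    intro a ha
    rcases hprof a ha with ⟨h1, h2⟩ | ⟨h1, h2⟩ | ⟨h1, _, hd1, he1, _, _⟩ | ⟨h1, _, hd1, he1, _, _⟩
    · subst h1; rw [ebar'_negone, ebar'_one]
    · subst h1; rw [show -(-1:ℤ) = 1 by norm_num, ebar'_one, ebar'_negone]; norm_num
    · rw [ebar'_eval_neg e (by omega : -a < -1), he1,
        show -a + 1 = -(a-1) by ring, hneg _ hd1]; ring
    · rw [ebar'_eval_pos e (by omega : 1 < -a), he1,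
        show -a - 1 = -(a+1) by ring, hneg _ hd1]; ring
  have hbarmono : ∀ a ∈ Dbar' D, ∀ b ∈ Dbar' D, a < b → ebar' e a < ebar' e b := by
    intro a ha b hb hab
    rcases hprof a ha with ⟨h1, h2⟩ | ⟨h1, h2⟩ | ⟨h1, h2, hd1, he1, hl1, hu1⟩ |
        ⟨h1, h2, hd1, he1, hl1, hu1⟩ <;>
      rcases hprof b hb with ⟨g1, g2⟩ | ⟨g1, g2⟩ | ⟨g1, g2, gd1, ge1, gl1, gu1⟩ |
        ⟨g1, g2, gd1, ge1, gl1, gu1⟩ <;>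
      first
        | omega
        | (have := hmonoe _ hd1 _ gd1 (by omega); omega)
  have hmmbar : ∀ a ∈ Dbar' D, ∀ b ∈ Dbar' D,
      min a b ∈ Dbar' D ∧ max a b ∈ Dbar' D := by
    intro a ha b hb
    rcases le_total a b with h | h
    · rw [min_eq_left h, max_eq_right h]; exact ⟨ha, hb⟩
    · rw [min_eq_right h, max_eq_left h]; exact ⟨hb, ha⟩
  have himpbar : ∀ a ∈ Dbar' D, ∀ b ∈ Dbar' D, sImp a b ∈ Dbar' D := by
    intro a ha b hb
    by_cases h : a ≤ b
    · simp only [sImp, if_pos h]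
      exact (hmmbar _ (hnegbar a ha) _ hb).2
    · simp only [sImp, if_neg h]
      exact (hmmbar _ (hnegbar a ha) _ hb).1
  have hsub : Dbar' D ⊆ Zeven m := by
    intro a ha
    show -m ≤ a ∧ a ≤ m ∧ a ≠ 0
    rcases hprof a ha with ⟨h1, _⟩ | ⟨h1, _⟩ | ⟨h1, h2, _⟩ | ⟨h1, h2, _⟩ <;> omega
  have hemem : ∀ a ∈ Dbar' D, ebar' e a ∈ Zeven m := by
    intro a ha
    show -m ≤ ebar' e a ∧ ebar' e a ≤ m ∧ ebar' e a ≠ 0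
    rcases hprof a ha with ⟨_, h2⟩ | ⟨_, h2⟩ | ⟨_, _, _, _, h4, h5⟩ |
      ⟨_, _, _, _, h4, h5⟩ <;> omega
  have key := preserve_ops (ebar' e) (Dbar' D) hnegbar hbarneg hbarmono
  exact ⟨hsub, mem_Dbar'.mpr (Or.inl rfl),
    fun a ha b hb => ⟨(hmmbar a ha b hb).1, (hmmbar a ha b hb).2,
      hnegbar a ha, himpbar a ha b hb⟩,
    hemem,
    fun a ha b hb => ⟨(key a ha b hb).1, (key a ha b hb).2.1,
      hbarneg a ha, (key a ha b hb).2.2⟩,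
    ebar'_one e⟩

/-- For m ≥ 3, lifting a partial endomorphism e of Z_{2(m-1)} to the map ē
gives a partial endomorphism of the Sugihara monoid W_{2m} (t = 1). -/
theorem lift_partial_endomorphism (m : ℤ) (hm : 3 ≤ m)
    (D : Set ℤ) (e : ℤ → ℤ)
    (hD : D ⊆ Zeven (m - 1))
    (hDcl : ∀ a ∈ D, ∀ b ∈ D, min a b ∈ D ∧ max a b ∈ D ∧ -a ∈ D ∧ sImp a b ∈ D)
    (hmem : ∀ a ∈ D, e a ∈ Zeven (m - 1))
    (hmin : ∀ a ∈ D, ∀ b ∈ D, e (min a b) = min (e a) (e b))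
    (hmax : ∀ a ∈ D, ∀ b ∈ D, e (max a b) = max (e a) (e b))
    (hneg : ∀ a ∈ D, e (-a) = -(e a))
    (himp : ∀ a ∈ D, ∀ b ∈ D, e (sImp a b) = sImp (e a) (e b)) :
    let Dbar : Set ℤ :=
      {1, -1} ∪ {a | 1 < a ∧ a - 1 ∈ D} ∪ {a | a < -1 ∧ a + 1 ∈ D}
    let ebar : ℤ → ℤ := fun a =>
      if a = 1 then 1 else if a = -1 then -1
      else if 1 < a then e (a - 1) + 1 else e (a + 1) - 1
    (Dbar ⊆ Zeven m) ∧
    ((1 : ℤ) ∈ Dbar) ∧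
    (∀ a ∈ Dbar, ∀ b ∈ Dbar,
      min a b ∈ Dbar ∧ max a b ∈ Dbar ∧ -a ∈ Dbar ∧ sImp a b ∈ Dbar) ∧
    (∀ a ∈ Dbar, ebar a ∈ Zeven m) ∧
    (∀ a ∈ Dbar, ∀ b ∈ Dbar,
      ebar (min a b) = min (ebar a) (ebar b) ∧
      ebar (max a b) = max (ebar a) (ebar b) ∧
      ebar (-a) = -(ebar a) ∧
      ebar (sImp a b) = sImp (ebar a) (ebar b)) ∧
    ebar 1 = 1 := by
  exact lift_aux m hm D e hD hDcl hmem hmin hmax hneg himp
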